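/- arXiv:math/0505610 — 5 statements merged into one kernel-verified Lean document; each statement's English description precedes it below -/
import Mathlib

section
/- Let Φ have Lipschitz constant Λ_Φ (in the ℓ¹ sense on X^(N+1)), let τᵢ be Lipschitz with constant ≤ Λ_T, γ := Λ_Φ·Λ_T < 1, and suppose max_i ρ(vᵢ(t), vᵢ(t-1)) ≤ Ĉ·γ̂^t with γ̂ < 1. Then any solution u of u(t+1) = Φ(τ₀ u(t), τ₁ v₁(t), …) satisfies ρ(u(t+1), u(t)) ≤ γ^t·ρ(u(1),u(0)) + 2N·Ĉ·t·(max(γ, γ̂))^{t+1} for all t ≥ 1. -/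
open Filter Topology

/-- increment estimate for the non-autonomous recursion:
`ρ(u(t+1),u(t)) ≤ γ^t ρ(u(1),u(0)) + 2NĈt(max(γ,γ̂))^{t+1}`. -/
theorem stmt_2 {X : Type*} [MetricSpace X] [CompactSpace X]
    (N : ℕ) (ΛΦ ΛT : ℝ) (hΛΦ : 0 ≤ ΛΦ) (hΛT : 0 ≤ ΛT)
    (γ : ℝ) (hγ : γ = ΛΦ * ΛT) (hγ1 : γ < 1)
    (Φ : (Fin (N + 1) → X) → X) (τ0 : X → X) (τ : Fin N → X → X)
    (v : Fin N → ℕ → X)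
    (Chat γhat : ℝ) (hChat : 0 ≤ Chat) (hγhat0 : 0 ≤ γhat) (hγhat : γhat < 1)
    (hτ0 : ∀ x y, dist (τ0 x) (τ0 y) ≤ ΛT * dist x y)
    (hτ : ∀ i x y, dist (τ i x) (τ i y) ≤ ΛT * dist x y)
    (hΦ : ∀ z z' : Fin (N + 1) → X,
      dist (Φ z) (Φ z') ≤ ΛΦ * ∑ i, dist (z i) (z' i))
    (hv : ∀ i t, dist (v i (t + 1)) (v i t) ≤ Chat * γhat ^ (t + 1))
    (u : ℕ → X)
    (hu : ∀ t, u (t + 1) = Φ (Fin.cons (τ0 (u t)) (fun i => τ i (v i t)))) :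
    ∀ t, 1 ≤ t →
      dist (u (t + 1)) (u t) ≤
        γ ^ t * dist (u 1) (u 0) +
          2 * N * Chat * t * (max γ γhat) ^ (t + 1) := by
  have hγ0 : 0 ≤ γ := by rw [hγ]; positivity
  set m : ℝ := max γ γhat with hm
  have hm0 : 0 ≤ m := le_trans hγ0 (le_max_left _ _)
  have hgm : γ ≤ m := le_max_left _ _
  have hhm : γhat ≤ m := le_max_right _ _
  have key : ∀ t, dist (u (t + 2)) (u (t + 1)) ≤
      γ * dist (u (t + 1)) (u t) + γ * N * Chat * γhat ^ (t + 1) := by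
    intro t
    have h1 := hΦ (Fin.cons (τ0 (u (t + 1))) (fun i => τ i (v i (t + 1))))
      (Fin.cons (τ0 (u t)) (fun i => τ i (v i t)))
    rw [← hu, ← hu] at h1
    have hsum : ∑ i, dist ((Fin.cons (τ0 (u (t + 1))) (fun i => τ i (v i (t + 1))) : Fin (N+1) → X) i)
        ((Fin.cons (τ0 (u t)) (fun i => τ i (v i t)) : Fin (N+1) → X) i)
        ≤ ΛT * dist (u (t + 1)) (u t) + N * (ΛT * (Chat * γhat ^ (t + 1))) := by
      rw [Fin.sum_univ_succ]
      simp only [Fin.cons_zero, Fin.cons_succ]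
      apply add_le_add
      · exact hτ0 _ _
      · calc ∑ i : Fin N, dist (τ i (v i (t + 1))) (τ i (v i t))
            ≤ ∑ _i : Fin N, ΛT * (Chat * γhat ^ (t + 1)) := by
              apply Finset.sum_le_sum
              intro i _
              exact le_trans (hτ i _ _) (by
                have := hv i t
                nlinarith [dist_nonneg (x := v i (t+1)) (y := v i t)])
          _ = N * (ΛT * (Chat * γhat ^ (t + 1))) := by
              rw [Finset.sum_const]; simp [mul_comm]
    calc dist (u (t + 2)) (u (t + 1)) ≤ _ := h1
      _ ≤ ΛΦ * (ΛT * dist (u (t + 1)) (u t) + N * (ΛT * (Chat * γhat ^ (t + 1)))) := by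
          exact mul_le_mul_of_nonneg_left hsum hΛΦ
      _ = γ * dist (u (t + 1)) (u t) + γ * N * Chat * γhat ^ (t + 1) := by
          rw [hγ]; ring
  have main : ∀ t : ℕ, dist (u (t + 1)) (u t) ≤
      γ ^ t * dist (u 1) (u 0) + 2 * N * Chat * t * m ^ (t + 1) := by
    intro t
    induction t with
    | zero => simp
    | succ n ih =>
      have h2 := key n
      have hmp : (0:ℝ) ≤ m ^ (n + 1) := pow_nonneg hm0 _
      have e1 : γ * m ^ (n + 1) ≤ m ^ (n + 2) :=
        le_trans (mul_le_mul_of_nonneg_right hgm hmp) (le_of_eq (pow_succ' m (n+1)).symm)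
      have e2 : γ * γhat ^ (n + 1) ≤ m ^ (n + 2) :=
        le_trans (mul_le_mul hgm (pow_le_pow_left₀ hγhat0 hhm _) (pow_nonneg hγhat0 _) hm0)
          (le_of_eq (pow_succ' m (n+1)).symm)
      have ih' := mul_le_mul_of_nonneg_left ih hγ0
      have hN : (0:ℝ) ≤ (N:ℝ) := Nat.cast_nonneg _
      calc dist (u (n + 2)) (u (n + 1))
          ≤ γ * dist (u (n + 1)) (u n) + γ * N * Chat * γhat ^ (n + 1) := h2
        _ ≤ γ ^ (n + 1) * dist (u 1) (u 0) + 2 * N * Chat * ((n:ℝ) + 1) * m ^ (n + 2) := by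
            have ih2 : γ * dist (u (n + 1)) (u n) ≤
                γ ^ (n + 1) * dist (u 1) (u 0) + 2 * N * Chat * n * (γ * m ^ (n + 1)) :=
              ih'.trans_eq (by ring)
            have hA := mul_le_mul_of_nonneg_left e1
              (by positivity : (0:ℝ) ≤ 2 * (N:ℝ) * Chat * n)
            have hB := mul_le_mul_of_nonneg_left e2 (by positivity : (0:ℝ) ≤ (N:ℝ) * Chat)
            have hC := mul_nonneg (mul_nonneg hN hChat) (pow_nonneg hm0 (n + 2))
            nlinarith [ih2, hA, hB, hC]
        _ = γ ^ (n + 1) * dist (u 1) (u 0) + 2 * N * Chat * ((n:ℕ) + 1 : ℕ) * m ^ (n + 1 + 1) := by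
            push_cast; ring
  intro t _
  exact main t
end

section
/- Let B be a finite set of sites with an acyclic directed connectivity graph G such that every site in B is reachable in G from some site outside B, let each local map Tᵢ : X → X be Lipschitz with constant ≤ Λ_T, and let the interaction I satisfy ρ((I x)_ℓ, (I y)_ℓ) ≤ Λ_I · Σᵢ ρ(xᵢ, yᵢ) with ((I x)_ℓ depending only on coordinates at sites j with N(j) ≤ N(ℓ) for a topological ordering N). If Λ_I·Λ_T < 1, then for any fixed boundary values x|_{B^c} there exists a vector x̂|_B such that for every choice of initial data x|_B(0), the trajectory of the map (F x)_i = (I ∘ T⃗ x)_i for i ∈ B, (F x)_i = xᵢ for i ∉ B, converges pointwise to x̂|_B as t → ∞ (long range action). -/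
open Filter Topology

/-- long range action. In a finite box `B` with unidirectional
(acyclic) interaction, every site reachable from outside `B`, local maps
Lipschitz with constant `ΛT` and interaction ℓ¹-Lipschitz with constant `ΛI`,
`ΛI * ΛT < 1`, the asymptotic dynamics inside `B` is completely determined by
the boundary conditions: there is a limit solution `x̂|_B` attracting every
initial datum inside the box. -/
theorem stmt_5 {X : Type*} [MetricSpace X] [CompactSpace X]
    {S : Type*} [Countable S] [DecidableEq S] (B : Finset S)
    (T : S → X → X) (I : (S → X) → (S → X)) (hIcont : Continuous I)
    (ΛT ΛI : ℝ) (hΛT : 0 ≤ ΛT) (hΛI0 : 0 ≤ ΛI) (hΛI : ΛI < 1)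
    (hcontr : ΛI * ΛT < 1)
    (hT : ∀ i x y, dist (T i x) (T i y) ≤ ΛT * dist x y)
    (hIlip : ∀ (ℓ : S) (F : Finset S) (x y : S → X), (∀ i, i ∉ F → x i = y i) →
        dist (I x ℓ) (I y ℓ) ≤ ΛI * ∑ i ∈ F, dist (x i) (y i))
    (hIdiag : ∀ C : X, I (fun _ => C) = fun _ => C)
    -- connectivity graph: `E j ℓ` means `(I x)_ℓ` depends on `x_j`
    (E : S → S → Prop)
    (hdep : ∀ (ℓ : S) (x y : S → X), x ℓ = y ℓ → (∀ j, E j ℓ → x j = y j) →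
        I x ℓ = I y ℓ)
    -- unidirectionality: a topological ordering of the sites of `B`
    (N : S → ℤ) (hNinj : Set.InjOn N (B : Set S))
    (huni : ∀ i j, i ∈ B → j ∈ B → E i j → N i < N j)
    -- every site of `B` is reachable in the graph from outside of `B`
    (hreach : ∀ i ∈ B, ∃ j, j ∉ B ∧ Relation.TransGen E j i)
    -- the dynamics in the box with frozen boundary conditions
    (F : (S → X) → (S → X))
    (hF : ∀ x i, F x i = if i ∈ B then I (fun j => T j (x j)) i else x i)
    -- fixed boundary values
    (xb : S → X) :
    ∃ xhat : S → X, ∀ x0 : S → X, (∀ i, i ∉ B → x0 i = xb i) →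
      ∀ i ∈ B, Tendsto (fun t => F^[t] x0 i) atTop (𝓝 (xhat i)) := by
  classical
  set q : ℝ := ΛI * ΛT with hq_def
  have hq0 : 0 ≤ q := mul_nonneg hΛI0 hΛT
  set r : ℝ := (1 + q) / 2 with hr_def
  have hqr : q < r := by simp only [hr_def]; linarith
  have hr1 : r < 1 := by simp only [hr_def]; linarith
  have hr0 : 0 ≤ r := le_of_lt (lt_of_le_of_lt hq0 hqr)
  -- coordinates outside B are frozen
  have hout : ∀ (z : S → X) (t : ℕ) (j : S), j ∉ B → F^[t] z j = z j := by
    intro z t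
    induction t with
    | zero => intro j _; rfl
    | succ t ih =>
      intro j hj
      rw [Function.iterate_succ_apply', hF, if_neg hj]
      exact ih j hj
  -- key: geometric decay of discrepancies, by strong induction on rank
  have key : ∀ n : ℕ, ∀ ℓ ∈ B, (B.filter (fun j => N j < N ℓ)).card = n →
      ∀ x y : S → X, (∀ j, j ∉ B → x j = y j) →
      ∃ C : ℝ, 0 ≤ C ∧ ∀ t, dist (F^[t] x ℓ) (F^[t] y ℓ) ≤ C * r ^ t := by
    intro n
    induction n using Nat.strong_induction_on with
    | _ n IH =>
      intro ℓ hℓ hrank x y hxy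
      set pred : Finset S := B.filter (fun j => E j ℓ ∧ j ≠ ℓ) with hpred_def
      have hℓnotpred : ℓ ∉ pred := by
        simp [hpred_def]
      have houtxy : ∀ t j, j ∉ B → F^[t] x j = F^[t] y j := by
        intro t j hj
        rw [hout x t j hj, hout y t j hj, hxy j hj]
      -- one-step bound
      have hstep : ∀ t, dist (F^[t+1] x ℓ) (F^[t+1] y ℓ) ≤
          q * dist (F^[t] x ℓ) (F^[t] y ℓ) +
          q * ∑ i ∈ pred, dist (F^[t] x i) (F^[t] y i) := by
        intro t
        set u : S → X := fun j => T j (F^[t] x j) with hu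
        set v : S → X := fun j => T j (F^[t] y j) with hv
        set w : S → X := fun j => if j = ℓ ∨ E j ℓ then u j else v j with hw
        have hxℓ : F^[t+1] x ℓ = I w ℓ := by
          rw [Function.iterate_succ_apply', hF, if_pos hℓ]
          exact hdep ℓ u w (by simp [hw]) (fun j hj => by simp [hw, hj])
        have hyℓ : F^[t+1] y ℓ = I v ℓ := by
          rw [Function.iterate_succ_apply', hF, if_pos hℓ]
        rw [hxℓ, hyℓ]
        have hagree : ∀ i, i ∉ insert ℓ pred → w i = v i := by
          intro i hi
          by_cases hcond : i = ℓ ∨ E i ℓ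
          · have hiℓ : i ≠ ℓ := fun h => hi (by simp [h])
            have hEi : E i ℓ := hcond.resolve_left hiℓ
            have hiB : i ∉ B := by
              intro hiB
              exact hi (Finset.mem_insert_of_mem (by simp [hpred_def, hiB, hEi, hiℓ]))
            simp only [hw, if_pos hcond, hu, hv]
            rw [houtxy t i hiB]
          · simp [hw, hcond]
        have h1 : dist (I w ℓ) (I v ℓ) ≤ ΛI * ∑ i ∈ insert ℓ pred, dist (w i) (v i) :=
          hIlip ℓ (insert ℓ pred) w v hagree
        have h2 : ∀ i ∈ insert ℓ pred, dist (w i) (v i) ≤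
            ΛT * dist (F^[t] x i) (F^[t] y i) := by
          intro i hi
          have hcond : i = ℓ ∨ E i ℓ := by
            rcases Finset.mem_insert.1 hi with h | h
            · exact Or.inl h
            · exact Or.inr (Finset.mem_filter.1 h).2.1
          simp only [hw, if_pos hcond, hu, hv]
          exact hT i _ _
        have h3 : ∑ i ∈ insert ℓ pred, dist (w i) (v i) ≤
            ∑ i ∈ insert ℓ pred, ΛT * dist (F^[t] x i) (F^[t] y i) :=
          Finset.sum_le_sum h2
        have h4 : ΛI * ∑ i ∈ insert ℓ pred, dist (w i) (v i) ≤
            ΛI * ∑ i ∈ insert ℓ pred, ΛT * dist (F^[t] x i) (F^[t] y i) :=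
          mul_le_mul_of_nonneg_left h3 hΛI0
        calc dist (I w ℓ) (I v ℓ) ≤ _ := h1
          _ ≤ ΛI * ∑ i ∈ insert ℓ pred, ΛT * dist (F^[t] x i) (F^[t] y i) := h4
          _ = q * dist (F^[t] x ℓ) (F^[t] y ℓ) +
              q * ∑ i ∈ pred, dist (F^[t] x i) (F^[t] y i) := by
            have hs : ∑ i ∈ pred, ΛT * dist (F^[t] x i) (F^[t] y i)
                = ΛT * ∑ i ∈ pred, dist (F^[t] x i) (F^[t] y i) :=
              (Finset.mul_sum _ _ _).symm
            rw [Finset.sum_insert hℓnotpred, hs, hq_def]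
            ring
      -- apply IH to each predecessor
      have hIHpred : ∀ i : S, ∃ C : ℝ, 0 ≤ C ∧ (i ∈ pred →
          ∀ t, dist (F^[t] x i) (F^[t] y i) ≤ C * r ^ t) := by
        intro i
        by_cases hi : i ∈ pred
        · obtain ⟨hiB, hEi, hiℓ⟩ := Finset.mem_filter.1 hi |>.imp id (fun h => h)
          have hNi : N i < N ℓ := huni i ℓ hiB hℓ hEi
          have hlt : (B.filter (fun j => N j < N i)).card < n := by
            rw [← hrank]
            apply Finset.card_lt_card
            constructor
            · intro j hj
              obtain ⟨hjB, hjN⟩ := Finset.mem_filter.1 hj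
              exact Finset.mem_filter.2 ⟨hjB, lt_trans hjN hNi⟩
            · intro hsub
              have : i ∈ B.filter (fun j => N j < N i) :=
                hsub (Finset.mem_filter.2 ⟨hiB, hNi⟩)
              exact lt_irrefl _ (Finset.mem_filter.1 this).2
          obtain ⟨C, hC0, hC⟩ := IH _ hlt i hiB rfl x y hxy
          exact ⟨C, hC0, fun _ => hC⟩
        · exact ⟨0, le_refl 0, fun h => absurd h hi⟩
      choose Cp hCp0 hCp using hIHpred
      set D : ℝ := q * ∑ i ∈ pred, Cp i with hD_def
      have hD0 : 0 ≤ D :=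
        mul_nonneg hq0 (Finset.sum_nonneg (fun i _ => hCp0 i))
      have hsumbound : ∀ t, q * ∑ i ∈ pred, dist (F^[t] x i) (F^[t] y i) ≤ D * r ^ t := by
        intro t
        have : ∑ i ∈ pred, dist (F^[t] x i) (F^[t] y i) ≤ ∑ i ∈ pred, Cp i * r ^ t :=
          Finset.sum_le_sum (fun i hi => hCp i hi t)
        calc q * ∑ i ∈ pred, dist (F^[t] x i) (F^[t] y i)
            ≤ q * ∑ i ∈ pred, Cp i * r ^ t := mul_le_mul_of_nonneg_left this hq0
          _ = D * r ^ t := by rw [hD_def, ← Finset.sum_mul]; ring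
      -- geometric bound via induction on t
      have hrq : 0 < r - q := by linarith
      refine ⟨dist (x ℓ) (y ℓ) + D / (r - q),
        add_nonneg dist_nonneg (div_nonneg hD0 hrq.le), ?_⟩
      set C : ℝ := dist (x ℓ) (y ℓ) + D / (r - q) with hC_def
      have haux : q * C + D ≤ C * r := by
        have : C * (r - q) = dist (x ℓ) (y ℓ) * (r - q) + D := by
          rw [hC_def, add_mul, div_mul_cancel₀ _ hrq.ne']
        nlinarith [dist_nonneg (x := x ℓ) (y := y ℓ)]
      intro t
      induction t with
      | zero =>
        have h0 : dist (x ℓ) (y ℓ) ≤ C := le_add_of_nonneg_right (div_nonneg hD0 hrq.le)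
        simpa using h0
      | succ t ih =>
        have hrt : (0:ℝ) ≤ r ^ t := pow_nonneg hr0 t
        calc dist (F^[t+1] x ℓ) (F^[t+1] y ℓ)
            ≤ q * dist (F^[t] x ℓ) (F^[t] y ℓ) +
              q * ∑ i ∈ pred, dist (F^[t] x i) (F^[t] y i) := hstep t
          _ ≤ q * (C * r ^ t) + D * r ^ t := by
              have := hsumbound t
              have h5 : q * dist (F^[t] x ℓ) (F^[t] y ℓ) ≤ q * (C * r ^ t) :=
                mul_le_mul_of_nonneg_left ih hq0
              linarith
          _ = (q * C + D) * r ^ t := by ring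
          _ ≤ (C * r) * r ^ t := mul_le_mul_of_nonneg_right haux hrt
          _ = C * r ^ (t + 1) := by ring
  -- the reference trajectory converges
  have hFxb : ∀ j, j ∉ B → xb j = F xb j := by
    intro j hj; rw [hF, if_neg hj]
  have hcauchy : ∀ ℓ ∈ B, ∃ a : X, Tendsto (fun t => F^[t] xb ℓ) atTop (𝓝 a) := by
    intro ℓ hℓ
    obtain ⟨C, hC0, hC⟩ := key _ ℓ hℓ rfl xb (F xb) hFxb
    have hCS : CauchySeq (fun t => F^[t] xb ℓ) := by
      apply cauchySeq_of_le_geometric r C hr1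
      intro t
      have := hC t
      rwa [Function.iterate_succ_apply]
    exact cauchySeq_tendsto_of_complete hCS
  set xhat : S → X := fun ℓ =>
    if h : ∃ a : X, Tendsto (fun t => F^[t] xb ℓ) atTop (𝓝 a) then h.choose else xb ℓ
    with hxhat_def
  have hxhat : ∀ ℓ ∈ B, Tendsto (fun t => F^[t] xb ℓ) atTop (𝓝 (xhat ℓ)) := by
    intro ℓ hℓ
    have h := hcauchy ℓ hℓ
    simp only [hxhat_def, dif_pos h]
    exact h.choose_spec
  refine ⟨xhat, ?_⟩
  intro x0 hx0 i hi
  obtain ⟨C, hC0, hC⟩ := key _ i hi rfl x0 xb hx0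
  have hdist0 : Tendsto (fun t => dist (F^[t] x0 i) (F^[t] xb i)) atTop (𝓝 0) := by
    have hg : Tendsto (fun t : ℕ => C * r ^ t) atTop (𝓝 0) := by
      rw [show (0:ℝ) = C * 0 by ring]
      exact (tendsto_pow_atTop_nhds_zero_of_lt_one hr0 hr1).const_mul C
    exact squeeze_zero (fun t => dist_nonneg) hC hg
  have hlim := hxhat i hi
  rw [tendsto_iff_dist_tendsto_zero]
  have hsq : ∀ t, dist (F^[t] x0 i) (xhat i) ≤
      dist (F^[t] x0 i) (F^[t] xb i) + dist (F^[t] xb i) (xhat i) :=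
    fun t => dist_triangle _ _ _
  have hlim2 : Tendsto (fun t => dist (F^[t] xb i) (xhat i)) atTop (𝓝 0) :=
    tendsto_iff_dist_tendsto_zero.1 hlim
  have : Tendsto (fun t => dist (F^[t] x0 i) (F^[t] xb i) +
      dist (F^[t] xb i) (xhat i)) atTop (𝓝 0) := by
    have := hdist0.add hlim2
    simpa using this
  exact squeeze_zero (fun t => dist_nonneg) hsq this
end

section
/- In the one-dimensional linear unidirectional model with T x = a x + b, a > 1, (1−c)a < 1, the distance between limit solutions corresponding to two homogeneous boundary conditions v and v' grows exponentially in the distance from the boundary: if u_k, u_k' denote the limit values at the k-th site from the boundary (defined recursively by u_k = (1−c)·T u_k + c·T u_{k−1} with u_0 = v, u_0' = v'), then |u_k − u_k'| = (c a/(c a − (a−1)))^k · |v − v'|, with base c a/(c a − (a−1)) > 1. -/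
/-- in the one-dimensional linear unidirectional model the
distance between limit solutions for two homogeneous boundary conditions
grows exponentially with the distance from the boundary. -/
theorem stmt_8 (a b c v v' : ℝ) (u u' : ℕ → ℝ)
    (ha : 1 < a) (hc0 : 0 < c) (hc1 : c < 1)
    (hcontr : (1 - c) * a < 1)
    (hu0 : u 0 = v) (hu'0 : u' 0 = v')
    (hu : ∀ k, u (k + 1) = (1 - c) * (a * u (k + 1) + b) + c * (a * u k + b))
    (hu' : ∀ k, u' (k + 1) = (1 - c) * (a * u' (k + 1) + b) + c * (a * u' k + b)) :
    (∀ k, |u k - u' k| = (c * a / (c * a - (a - 1))) ^ k * |v - v'|) ∧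
      1 < c * a / (c * a - (a - 1)) := by
  have hd : 0 < c * a - (a - 1) := by nlinarith
  have hr : 1 < c * a / (c * a - (a - 1)) := by
    rw [lt_div_iff₀ hd]; nlinarith
  refine ⟨?_, hr⟩
  intro k
  induction k with
  | zero => simp [hu0, hu'0]
  | succ k ih =>
    have hstep : u (k + 1) - u' (k + 1) =
        (c * a / (c * a - (a - 1))) * (u k - u' k) := by
      have h1 := hu k
      have h2 := hu' k
      field_simp
      nlinarith [h1, h2]
    rw [hstep, abs_mul, abs_of_pos (lt_trans one_pos hr), ih, pow_succ]
    ring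
end

section
/- Under the hypotheses of the long range action theorem but with 'free' boundary conditions—i.e., the dynamics is (F x)_i = (I ∘ T⃗ x)_i for i ∈ B and (F x)_i = Tᵢ xᵢ for i ∉ B—for any initial boundary data x|_{B^c}(0) there exists a (time-dependent) vector-function x̂(t) such that for all initial data x|_B(0), the distance between F^t x(0) restricted to B and x̂(t) tends to 0 as t → ∞. -/
open Filter Topology

private lemma aux_pow (a r : ℕ) : a ^ r + r * a ^ (r - 1) ≤ (a + 1) ^ r := by
  induction r with
  | zero => simp
  | succ n ih =>
    have key : n * a ^ n ≤ n * a ^ (n - 1) * a := by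
      cases n with
      | zero => simp
      | succ m =>
        simp only [Nat.succ_sub_one, mul_assoc, ← pow_succ]
        exact le_refl _
    calc a ^ (n + 1) + (n + 1) * a ^ n
        = a ^ n * a + a ^ n + n * a ^ n := by ring
      _ ≤ a ^ n * a + a ^ n + n * a ^ (n - 1) * a := by omega
      _ ≤ (a ^ n + n * a ^ (n - 1)) * (a + 1) := by ring_nf; omega
      _ ≤ (a + 1) ^ n * (a + 1) := by
          exact Nat.mul_le_mul_right _ ih
      _ = (a + 1) ^ (n + 1) := by ring

/-- long range action with free boundary conditions: the
boundary sites evolve autonomously under their local maps, and there is a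
time-dependent limit solution `x̂(t)` attracting every initial datum inside
the box. -/
theorem stmt_10 {X : Type*} [MetricSpace X] [CompactSpace X]
    {S : Type*} [Countable S] [DecidableEq S] (B : Finset S)
    (T : S → X → X) (I : (S → X) → (S → X)) (hIcont : Continuous I)
    (ΛT ΛI : ℝ) (hΛT : 0 ≤ ΛT) (hΛI0 : 0 ≤ ΛI) (hΛI : ΛI < 1)
    (hcontr : ΛI * ΛT < 1)
    (hT : ∀ i x y, dist (T i x) (T i y) ≤ ΛT * dist x y)
    (hIlip : ∀ (ℓ : S) (F : Finset S) (x y : S → X), (∀ i, i ∉ F → x i = y i) →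
        dist (I x ℓ) (I y ℓ) ≤ ΛI * ∑ i ∈ F, dist (x i) (y i))
    (hIdiag : ∀ C : X, I (fun _ => C) = fun _ => C)
    (E : S → S → Prop)
    (hdep : ∀ (ℓ : S) (x y : S → X), x ℓ = y ℓ → (∀ j, E j ℓ → x j = y j) →
        I x ℓ = I y ℓ)
    (N : S → ℤ) (hNinj : Set.InjOn N (B : Set S))
    (huni : ∀ i j, i ∈ B → j ∈ B → E i j → N i < N j)
    (hreach : ∀ i ∈ B, ∃ j, j ∉ B ∧ Relation.TransGen E j i)
    -- the dynamics with free boundary conditions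
    (F : (S → X) → (S → X))
    (hF : ∀ x i, F x i = if i ∈ B then I (fun j => T j (x j)) i else T i (x i))
    -- initial boundary data
    (xb : S → X) :
    ∃ xhat : ℕ → S → X, ∀ x0 : S → X, (∀ i, i ∉ B → x0 i = xb i) →
      ∀ i ∈ B, Tendsto (fun t => dist (F^[t] x0 i) (xhat t i)) atTop (𝓝 0) := by
  classical
  obtain ⟨C, hC⟩ := Metric.isBounded_iff.mp (isCompact_univ (X := X)).isBounded
  set C' : ℝ := max C 0 with hC'def
  have hC' : ∀ x y : X, dist x y ≤ C' := fun x y =>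
    le_max_of_le_left (hC trivial trivial)
  have hC'0 : 0 ≤ C' := le_max_right _ _
  set q : ℝ := ΛI * ΛT with hqdef
  have hq0 : 0 ≤ q := mul_nonneg hΛI0 hΛT
  set q' : ℝ := max q (1/2) with hq'def
  have hq'0 : 0 < q' := lt_of_lt_of_le (by norm_num) (le_max_right _ _)
  have hq'1 : q' < 1 := max_lt hcontr (by norm_num)
  have hqq' : q ≤ q' := le_max_left _ _
  refine ⟨fun t => F^[t] xb, ?_⟩
  intro x0 hx0 i hi
  -- the two orbits agree outside B forever
  have lemA : ∀ t, ∀ j, j ∉ B → F^[t] x0 j = F^[t] xb j := by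
    intro t
    induction t with
    | zero => exact hx0
    | succ t ih =>
      intro j hj
      rw [Function.iterate_succ_apply', Function.iterate_succ_apply',
        hF _ j, hF _ j, if_neg hj, if_neg hj, ih j hj]
  have hnoself : ∀ k ∈ B, ¬ E k k := fun k hk hE => lt_irrefl _ (huni k k hk hk hE)
  -- one-step estimate inside B
  have lemB : ∀ (x y : S → X), (∀ j, j ∉ B → x j = y j) → ∀ k ∈ B,
      dist (F x k) (F y k) ≤ q * (dist (x k) (y k) +
        ∑ j ∈ B.filter (fun j => E j k), dist (x j) (y j)) := by
    intro x y hxy k hk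
    set P := B.filter (fun j => E j k) with hP
    set Tx : S → X := fun j => T j (x j) with hTx
    set Ty : S → X := fun j => T j (y j) with hTy
    set z : S → X := fun j => if j = k ∨ E j k then Ty j else Tx j with hz
    have hzk : I z k = I Ty k := by
      apply hdep
      · simp [hz]
      · intro j hj; simp [hz, hj]
    have hFx : F x k = I Tx k := by rw [hF, if_pos hk]
    have hFy : F y k = I Ty k := by rw [hF, if_pos hk]
    have hoff : ∀ j, j ∉ insert k P → Tx j = z j := by
      intro j hj
      simp only [Finset.mem_insert, hP, Finset.mem_filter] at hj
      push_neg at hj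
      by_cases hE : E j k
      · have hjB : j ∉ B := fun h => (hj.2 h) hE
        simp [hz, hE, hTx, hTy, hxy j hjB]
      · simp [hz, hj.1, hE]
    have h1 := hIlip k (insert k P) Tx z hoff
    have hkP : k ∉ P := by simp [hP, hnoself k hk]
    rw [Finset.sum_insert hkP] at h1
    have hzkk : z k = Ty k := by simp [hz]
    have hsum : ∑ j ∈ P, dist (Tx j) (z j) = ∑ j ∈ P, dist (Tx j) (Ty j) := by
      apply Finset.sum_congr rfl
      intro j hj
      simp only [hP, Finset.mem_filter] at hj
      simp [hz, hj.2]
    rw [hzkk, hsum] at h1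
    have h2 : dist (Tx k) (Ty k) + ∑ j ∈ P, dist (Tx j) (Ty j) ≤
        ΛT * (dist (x k) (y k) + ∑ j ∈ P, dist (x j) (y j)) := by
      rw [mul_add, Finset.mul_sum]
      exact add_le_add (hT k _ _) (Finset.sum_le_sum fun j _ => hT j _ _)
    calc dist (F x k) (F y k) = dist (I Tx k) (I z k) := by rw [hFx, hFy, hzk]
      _ ≤ ΛI * (dist (Tx k) (Ty k) + ∑ j ∈ P, dist (Tx j) (Ty j)) := h1
      _ ≤ ΛI * (ΛT * (dist (x k) (y k) + ∑ j ∈ P, dist (x j) (y j))) := by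
          exact mul_le_mul_of_nonneg_left h2 hΛI0
      _ = q * (dist (x k) (y k) + ∑ j ∈ P, dist (x j) (y j)) := by ring
  -- rank function
  set r : S → ℕ := fun k => (B.filter (fun j => N j < N k)).card with hrdef
  have hrlt : ∀ k ∈ B, ∀ j ∈ B.filter (fun j => E j k), r j < r k := by
    intro k hk j hj
    simp only [Finset.mem_filter] at hj
    have hNj : N j < N k := huni j k hj.1 hk hj.2
    apply Finset.card_lt_card
    rw [Finset.ssubset_iff_of_subset]
    · exact ⟨j, by simp [hj.1, hNj], by simp⟩
    · intro m hm
      simp only [Finset.mem_filter] at hm ⊢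
      exact ⟨hm.1, hm.2.trans hNj⟩
  have hcardP : ∀ k ∈ B, (B.filter (fun j => E j k)).card ≤ r k := by
    intro k hk
    apply Finset.card_le_card
    intro j hj
    simp only [Finset.mem_filter] at hj ⊢
    exact ⟨hj.1, huni j k hj.1 hk hj.2⟩
  -- main estimate
  have main : ∀ t, ∀ k ∈ B,
      dist (F^[t] x0 k) (F^[t] xb k) ≤ C' * ((t + 1) ^ (r k) : ℕ) * q ^ t := by
    intro t
    induction t with
    | zero =>
      intro k hk
      simpa using hC' (x0 k) (xb k)
    | succ t ih =>
      intro k hk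
      set P := B.filter (fun j => E j k) with hP
      have hnat : (t + 1) ^ (r k) + ∑ j ∈ P, (t + 1) ^ (r j) ≤ (t + 2) ^ (r k) := by
        have h3 : ∑ j ∈ P, (t + 1) ^ (r j) ≤ P.card * (t + 1) ^ (r k - 1) := by
          calc ∑ j ∈ P, (t + 1) ^ (r j) ≤ ∑ _j ∈ P, (t + 1) ^ (r k - 1) := by
                apply Finset.sum_le_sum
                intro j hj
                exact Nat.pow_le_pow_right (by omega)
                  (by have := hrlt k hk j hj; omega)
            _ = P.card * (t + 1) ^ (r k - 1) := by
                rw [Finset.sum_const, smul_eq_mul]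
        have h4 : P.card * (t + 1) ^ (r k - 1) ≤ r k * (t + 1) ^ (r k - 1) :=
          Nat.mul_le_mul_right _ (hcardP k hk)
        have h5 : (t + 1) ^ (r k) + (r k) * (t + 1) ^ (r k - 1) ≤ (t + 2) ^ (r k) :=
          aux_pow (t + 1) (r k)
        omega
      have h1 := lemB (F^[t] x0) (F^[t] xb) (lemA t) k hk
      have h2 : dist (F^[t] x0 k) (F^[t] xb k) +
          ∑ j ∈ P, dist (F^[t] x0 j) (F^[t] xb j) ≤
          (C' * q ^ t) * (((t + 1) ^ (r k) : ℕ) + ∑ j ∈ P, (((t + 1) ^ (r j) : ℕ) : ℝ)) := by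
        rw [mul_add, Finset.mul_sum]
        apply add_le_add
        · calc dist (F^[t] x0 k) (F^[t] xb k) ≤ C' * ((t + 1) ^ (r k) : ℕ) * q ^ t :=
              ih k hk
            _ = (C' * q ^ t) * ((t + 1) ^ (r k) : ℕ) := by ring
        · apply Finset.sum_le_sum
          intro j hj
          have hjB : j ∈ B := (Finset.mem_filter.mp hj).1
          calc dist (F^[t] x0 j) (F^[t] xb j) ≤ C' * ((t + 1) ^ (r j) : ℕ) * q ^ t :=
              ih j hjB
            _ = (C' * q ^ t) * ((t + 1) ^ (r j) : ℕ) := by ring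
      have h6 : (((t + 1) ^ (r k) : ℕ) : ℝ) + ∑ j ∈ P, (((t + 1) ^ (r j) : ℕ) : ℝ) ≤
          (((t + 2) ^ (r k) : ℕ) : ℝ) := by
        rw [← Nat.cast_sum, ← Nat.cast_add]
        exact_mod_cast hnat
      calc dist (F^[t+1] x0 k) (F^[t+1] xb k)
          = dist (F (F^[t] x0) k) (F (F^[t] xb) k) := by
            rw [Function.iterate_succ_apply', Function.iterate_succ_apply']
        _ ≤ q * (dist (F^[t] x0 k) (F^[t] xb k) +
              ∑ j ∈ P, dist (F^[t] x0 j) (F^[t] xb j)) := h1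
        _ ≤ q * ((C' * q ^ t) * (((t + 1) ^ (r k) : ℕ) +
              ∑ j ∈ P, (((t + 1) ^ (r j) : ℕ) : ℝ))) :=
            mul_le_mul_of_nonneg_left h2 hq0
        _ ≤ q * ((C' * q ^ t) * (((t + 2) ^ (r k) : ℕ) : ℝ)) := by
            apply mul_le_mul_of_nonneg_left _ hq0
            exact mul_le_mul_of_nonneg_left h6 (mul_nonneg hC'0 (pow_nonneg hq0 t))
        _ = C' * ((t + 1 + 1) ^ (r k) : ℕ) * q ^ (t + 1) := by
            push_cast
            ring
  -- upgrade to q'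
  have main' : ∀ t, dist (F^[t] x0 i) (F^[t] xb i) ≤
      C' * ((t + 1) ^ (r i) : ℕ) * q' ^ t := by
    intro t
    calc dist (F^[t] x0 i) (F^[t] xb i) ≤ C' * ((t + 1) ^ (r i) : ℕ) * q ^ t :=
        main t i hi
      _ ≤ C' * ((t + 1) ^ (r i) : ℕ) * q' ^ t := by
          apply mul_le_mul_of_nonneg_left (pow_le_pow_left₀ hq0 hqq' t)
          positivity
  -- the bound tends to zero
  have h0 : Tendsto (fun n : ℕ => (n : ℝ) ^ (r i) * q' ^ n) atTop (𝓝 0) :=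
    tendsto_pow_const_mul_const_pow_of_lt_one (r i) hq'0.le hq'1
  have h1 : Tendsto (fun t : ℕ => ((t + 1 : ℕ) : ℝ) ^ (r i) * q' ^ (t + 1)) atTop (𝓝 0) :=
    h0.comp (tendsto_add_atTop_nat 1)
  have h2 : Tendsto (fun t : ℕ => (C' / q') *
      (((t + 1 : ℕ) : ℝ) ^ (r i) * q' ^ (t + 1))) atTop (𝓝 0) := by
    simpa using h1.const_mul (C' / q')
  have heq : ∀ t : ℕ, (C' / q') * (((t + 1 : ℕ) : ℝ) ^ (r i) * q' ^ (t + 1)) =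
      C' * ((t + 1) ^ (r i) : ℕ) * q' ^ t := by
    intro t
    have : q' ≠ 0 := ne_of_gt hq'0
    push_cast
    rw [pow_succ]
    field_simp
  have h3 : Tendsto (fun t : ℕ => C' * (((t + 1) ^ (r i) : ℕ) : ℝ) * q' ^ t)
      atTop (𝓝 0) := by
    refine h2.congr fun t => heq t
  exact squeeze_zero (fun t => dist_nonneg) main' h3
end

section
/- Let I : X^S → X^S be an interaction satisfying ρ((I x)_ℓ, (I y)_ℓ) ≤ Λ_I·Σᵢ ρ(xᵢ, yᵢ) for all ℓ, and let π_ℓ denote projection of measures on X^S to the ℓ-th coordinate. If μ⃗, ν⃗ are probability measures on X^S that are product-decomposable at coordinate ℓ as μ⃗ = μ ⊗ μ_ℓ^⊥ and ν⃗ = ν ⊗ μ_ℓ^⊥ (same off-ℓ marginal μ_ℓ^⊥), then ρ*(π_ℓ I* μ⃗, π_ℓ I* ν⃗) ≤ Λ_I · ρ*(μ, ν) in the Hutchinson metric on measures on X. -/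
open MeasureTheory

/-- The Hutchinson (Kantorovich–Wasserstein-1) distance between two measures. -/
noncomputable def hutchinsonDist {X : Type*} [MetricSpace X] [MeasurableSpace X]
    (μ ν : Measure X) : ℝ :=
  ⨆ φ : {φ : X → ℝ // LipschitzWith 1 φ}, (∫ x, φ.1 x ∂μ - ∫ x, φ.1 x ∂ν)

section aux
variable {X : Type*} [MetricSpace X] [CompactSpace X] [MeasurableSpace X] [BorelSpace X]

lemma aux_bddAbove (μ ν : Measure X) [IsProbabilityMeasure μ] [IsProbabilityMeasure ν] :
    BddAbove (Set.range fun φ : {φ : X → ℝ // LipschitzWith 1 φ} =>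
      (∫ x, φ.1 x ∂μ - ∫ x, φ.1 x ∂ν)) := by
  have hne : Nonempty X := by
    by_contra h
    rw [not_nonempty_iff] at h
    have : μ Set.univ = 1 := measure_univ
    simp [Set.univ_eq_empty_iff.2 h] at this
  obtain ⟨x₀⟩ := hne
  refine ⟨2 * Metric.diam (Set.univ : Set X), ?_⟩
  rintro r ⟨φ, rfl⟩
  have hbd : ∀ x : X, ‖φ.1 x - φ.1 x₀‖ ≤ Metric.diam (Set.univ : Set X) := by
    intro x
    calc ‖φ.1 x - φ.1 x₀‖ = dist (φ.1 x) (φ.1 x₀) := (dist_eq_norm _ _).symm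
    _ ≤ 1 * dist x x₀ := φ.2.dist_le_mul x x₀
    _ ≤ Metric.diam (Set.univ : Set X) := by
        rw [one_mul]
        exact Metric.dist_le_diam_of_mem (isCompact_univ.isBounded) trivial trivial
  have hint : ∀ (κ : Measure X) [IsProbabilityMeasure κ],
      Integrable (fun x => φ.1 x - φ.1 x₀) κ := by
    intro κ _
    refine ⟨(φ.2.continuous.sub continuous_const).aestronglyMeasurable, ?_⟩
    exact HasFiniteIntegral.of_bounded (ae_of_all _ hbd)
  have key : ∀ (κ : Measure X) [IsProbabilityMeasure κ],
      ∫ x, φ.1 x ∂κ = (∫ x, (φ.1 x - φ.1 x₀) ∂κ) + φ.1 x₀ := by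
    intro κ _
    rw [integral_sub (by
      refine ⟨φ.2.continuous.aestronglyMeasurable, ?_⟩
      refine HasFiniteIntegral.of_bounded (C := Metric.diam (Set.univ : Set X) + ‖φ.1 x₀‖)
        (ae_of_all _ fun x => ?_)
      calc ‖φ.1 x‖ = ‖(φ.1 x - φ.1 x₀) + φ.1 x₀‖ := by ring_nf
      _ ≤ ‖φ.1 x - φ.1 x₀‖ + ‖φ.1 x₀‖ := norm_add_le _ _
      _ ≤ _ := by linarith [hbd x]) (integrable_const _), integral_const]
    simp
  dsimp only
  rw [key μ, key ν]
  have h1 : ∫ x, (φ.1 x - φ.1 x₀) ∂μ ≤ Metric.diam (Set.univ : Set X) := by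
    calc ∫ x, (φ.1 x - φ.1 x₀) ∂μ ≤ ∫ _, Metric.diam (Set.univ : Set X) ∂μ := by
          refine integral_mono (hint μ) (integrable_const _) fun x => ?_
          exact (le_abs_self _).trans (hbd x)
    _ = Metric.diam (Set.univ : Set X) := by simp
  have h2 : -(Metric.diam (Set.univ : Set X)) ≤ ∫ x, (φ.1 x - φ.1 x₀) ∂ν := by
    calc -(Metric.diam (Set.univ : Set X)) = ∫ _, -(Metric.diam (Set.univ : Set X)) ∂ν := by simp
    _ ≤ ∫ x, (φ.1 x - φ.1 x₀) ∂ν := by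
          refine integral_mono (integrable_const _) (hint ν) fun x => ?_
          have hx := hbd x
          rw [Real.norm_eq_abs] at hx
          linarith [neg_abs_le (φ.1 x - φ.1 x₀)]

  linarith

lemma aux_le_hd (μ ν : Measure X) [IsProbabilityMeasure μ] [IsProbabilityMeasure ν]
    (φ : X → ℝ) (hφ : LipschitzWith 1 φ) :
    ∫ x, φ x ∂μ - ∫ x, φ x ∂ν ≤ hutchinsonDist μ ν :=
  le_ciSup (aux_bddAbove μ ν) (⟨φ, hφ⟩ : {φ : X → ℝ // LipschitzWith 1 φ})

end aux

/-- the `ℓ`-th marginal of the pushforward under an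
ℓ¹-Lipschitz interaction `I` contracts the Hutchinson distance by the factor
`Λ_I`, for measures that differ only in their (independent) `ℓ`-th coordinate
distribution. -/
theorem stmt_13 {X : Type*} [MetricSpace X] [CompactSpace X]
    [MeasurableSpace X] [BorelSpace X]
    {S : Type*} [Countable S] [DecidableEq S]
    (I : (S → X) → (S → X)) (hIm : Measurable I)
    (ΛI : ℝ) (hΛI0 : 0 ≤ ΛI)
    (hIlip : ∀ (ℓ : S) (F : Finset S) (x y : S → X), (∀ i, i ∉ F → x i = y i) →
        dist (I x ℓ) (I y ℓ) ≤ ΛI * ∑ i ∈ F, dist (x i) (y i))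
    (ℓ : S)
    (μ ν : Measure X) [IsProbabilityMeasure μ] [IsProbabilityMeasure ν]
    -- the common off-`ℓ` distribution
    (μperp : Measure (S → X)) [IsProbabilityMeasure μperp]
    (μvec νvec : Measure (S → X))
    (hμvec : μvec = (μ.prod μperp).map fun p => Function.update p.2 ℓ p.1)
    (hνvec : νvec = (ν.prod μperp).map fun p => Function.update p.2 ℓ p.1) :
    hutchinsonDist ((μvec.map I).map fun x => x ℓ)
        ((νvec.map I).map fun x => x ℓ) ≤ ΛI * hutchinsonDist μ ν := by
  classical
  haveI hne : Nonempty {φ : X → ℝ // LipschitzWith 1 φ} :=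
    ⟨⟨fun _ => 0, (LipschitzWith.const 0).weaken (by norm_num)⟩⟩
  have hXne : Nonempty X := by
    by_contra h
    rw [not_nonempty_iff] at h
    have : μ Set.univ = 1 := measure_univ
    simp [Set.univ_eq_empty_iff.2 h] at this
  subst hμvec hνvec
  -- T : combined map
  set T : X × (S → X) → X := fun p => I (Function.update p.2 ℓ p.1) ℓ with hT
  have hupd : Measurable fun p : X × (S → X) => Function.update p.2 ℓ p.1 :=
    measurable_update'.comp (measurable_snd.prodMk measurable_fst)
  have hTm : Measurable T := (measurable_pi_apply ℓ).comp (hIm.comp hupd)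
  -- Lipschitz estimate of T in the first coordinate
  have hTlip : ∀ (z : S → X) (a b : X), dist (T (a, z)) (T (b, z)) ≤ ΛI * dist a b := by
    intro z a b
    have := hIlip ℓ {ℓ} (Function.update z ℓ a) (Function.update z ℓ b) (fun i hi => by
      rw [Function.update_of_ne (by simpa using hi), Function.update_of_ne (by simpa using hi)])
    simpa using this
  refine ciSup_le fun φ => ?_
  -- rewrite both sides as integrals over the products
  have hmap : ∀ (κ : Measure X) [IsProbabilityMeasure κ],
      ∫ x, φ.1 x ∂(((( κ.prod μperp).map fun p => Function.update p.2 ℓ p.1).map I).map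
        fun x => x ℓ) = ∫ p, φ.1 (T p) ∂(κ.prod μperp) := by
    intro κ _
    rw [integral_map (measurable_pi_apply ℓ).aemeasurable φ.2.continuous.aestronglyMeasurable,
        integral_map hIm.aemeasurable
          (Measurable.aestronglyMeasurable
            (show Measurable fun x : S → X => φ.1 (x ℓ) from
              φ.2.continuous.measurable.comp (measurable_pi_apply ℓ))),
        integral_map hupd.aemeasurable
          (Measurable.aestronglyMeasurable
            (show Measurable fun x : S → X => φ.1 (I x ℓ) from
              φ.2.continuous.measurable.comp ((measurable_pi_apply ℓ).comp hIm)))]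
  rw [hmap μ, hmap ν]
  -- boundedness of φ ∘ T
  have hφbd : ∃ C : ℝ, ∀ x : X, ‖φ.1 x‖ ≤ C := by
    rcases isEmpty_or_nonempty X with h | h
    · exact ⟨0, fun x => (h.false x).elim⟩
    · obtain ⟨C, hC⟩ := (isCompact_univ.image_of_continuousOn
        φ.2.continuous.norm.continuousOn).bddAbove
      exact ⟨C, fun x => hC ⟨x, trivial, rfl⟩⟩
  obtain ⟨C, hC⟩ := hφbd
  have hint : ∀ (κ : Measure X) [IsProbabilityMeasure κ],
      Integrable (fun p => φ.1 (T p)) (κ.prod μperp) := by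
    intro κ _
    refine ⟨((φ.2.continuous.measurable.comp hTm)).aestronglyMeasurable, ?_⟩
    exact HasFiniteIntegral.of_bounded (ae_of_all _ fun p => hC (T p))
  rw [integral_prod_symm _ (hint μ), integral_prod_symm _ (hint ν), ← integral_sub
    ((hint μ).integral_prod_right) ((hint ν).integral_prod_right)]
  -- pointwise bound
  have hpt : ∀ z : S → X,
      (∫ a, φ.1 (T (a, z)) ∂μ) - (∫ a, φ.1 (T (a, z)) ∂ν) ≤ ΛI * hutchinsonDist μ ν := by
    intro z
    rcases eq_or_lt_of_le hΛI0 with h0 | h0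
    · have hconst : ∀ a b : X, φ.1 (T (a, z)) = φ.1 (T (b, z)) := by
        intro a b
        have h1 := hTlip z a b
        rw [← h0, zero_mul] at h1
        have : T (a, z) = T (b, z) := by
          rwa [← dist_le_zero]
        rw [this]
      obtain ⟨x₀⟩ := hXne
      have : (fun a => φ.1 (T (a, z))) = fun _ => φ.1 (T (x₀, z)) := funext fun a => hconst a x₀
      rw [this]
      simp [← h0]
    · -- ΛI > 0 : rescale
      set ψ : X → ℝ := fun a => ΛI⁻¹ * φ.1 (T (a, z)) with hψ
      have hψlip : LipschitzWith 1 ψ := by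
        refine LipschitzWith.of_dist_le_mul fun a b => ?_
        rw [NNReal.coe_one, one_mul, hψ]
        have h1 : dist (φ.1 (T (a, z))) (φ.1 (T (b, z))) ≤ ΛI * dist a b := by
          calc dist (φ.1 (T (a, z))) (φ.1 (T (b, z))) ≤ 1 * dist (T (a, z)) (T (b, z)) :=
            φ.2.dist_le_mul _ _
          _ ≤ ΛI * dist a b := by rw [one_mul]; exact hTlip z a b
        rw [Real.dist_eq, ← mul_sub, abs_mul, abs_of_nonneg (inv_nonneg.2 hΛI0)]
        rw [Real.dist_eq] at h1
        calc ΛI⁻¹ * |φ.1 (T (a, z)) - φ.1 (T (b, z))| ≤ ΛI⁻¹ * (ΛI * dist a b) := by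
              exact mul_le_mul_of_nonneg_left h1 (inv_nonneg.2 hΛI0)
        _ = dist a b := by field_simp
      have hle := aux_le_hd μ ν ψ hψlip
      have hre : ∀ (κ : Measure X), ∫ a, ψ a ∂κ = ΛI⁻¹ * ∫ a, φ.1 (T (a, z)) ∂κ := by
        intro κ; rw [hψ]; exact integral_const_mul _ _
      rw [hre μ, hre ν, ← mul_sub] at hle
      calc (∫ a, φ.1 (T (a, z)) ∂μ) - (∫ a, φ.1 (T (a, z)) ∂ν)
          = ΛI * (ΛI⁻¹ * ((∫ a, φ.1 (T (a, z)) ∂μ) - ∫ a, φ.1 (T (a, z)) ∂ν)) := by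
            field_simp
      _ ≤ ΛI * hutchinsonDist μ ν := mul_le_mul_of_nonneg_left hle hΛI0
  calc ∫ z, ((∫ a, φ.1 (T (a, z)) ∂μ) - ∫ a, φ.1 (T (a, z)) ∂ν) ∂μperp
      ≤ ∫ _, ΛI * hutchinsonDist μ ν ∂μperp := by
        refine integral_mono (Integrable.sub ((hint μ).integral_prod_right)
          ((hint ν).integral_prod_right)) (integrable_const _) hpt
  _ = ΛI * hutchinsonDist μ ν := by simp
end
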